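/- Let A be an integrally closed domain containing ℚ. Then every finite injective ring extension A → B is split as a map of A-modules. -/

import Mathlib

open Polynomial Matrix TensorProduct

open Polynomial Matrix

lemma root_charpoly_isIntegral {A K : Type*} [CommRing A] [Field K] [IsAlgClosed K]
    [Algebra A K] {n : Type*} [Fintype n] [DecidableEq n]
    {M : Matrix n n K} {p : A[X]} (hp : p.Monic) (hM : Polynomial.aeval M p = 0)
    {μ : K} (hμ : μ ∈ M.charpoly.roots) : IsIntegral A μ := by
  have hroot : M.charpoly.IsRoot μ := isRoot_of_mem_roots hμ
  have hdet : (Matrix.scalar n μ - M).det = 0 := by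
    have h1 := RingHom.map_det (Polynomial.evalRingHom μ) (charmatrix M)
    have hmap : (Polynomial.evalRingHom μ).mapMatrix (charmatrix M)
        = Matrix.scalar n μ - M := by
      rw [charmatrix, map_sub]
      congr 1
      · ext i j
        simp [Matrix.scalar_apply, Matrix.diagonal_apply]
        split <;> simp
      · ext i j
        simp
    rw [hmap] at h1
    rw [← h1]
    exact hroot
  obtain ⟨v, hv, hvM⟩ := (Matrix.exists_mulVec_eq_zero_iff).mpr hdet
  have hev : M.mulVec v = μ • v := by
    rw [Matrix.sub_mulVec, sub_eq_zero] at hvM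
    rw [← hvM, Matrix.scalar_apply, ← Matrix.smul_one_eq_diagonal,
      Matrix.smul_mulVec, Matrix.one_mulVec]
  set φ := Matrix.toLinAlgEquiv' M with hφ
  have heig : Module.End.HasEigenvector φ μ v := by
    refine ⟨Module.End.mem_eigenspace_iff.mpr ?_, hv⟩
    rw [hφ, Matrix.toLinAlgEquiv'_apply, hev]
  have key := Module.End.aeval_apply_of_hasEigenvector (p := p.map (algebraMap A K)) heig
  have haev : Polynomial.aeval φ (p.map (algebraMap A K)) = 0 := by
    rw [Polynomial.aeval_map_algebraMap]
    show Polynomial.aeval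
      (((Matrix.toLinAlgEquiv' (R := K) (n := n)).toAlgHom.restrictScalars A) M) p = 0
    rw [Polynomial.aeval_algHom_apply, hM, map_zero]
  rw [haev] at key
  have h3 : (p.map (algebraMap A K)).eval μ = 0 := by
    rcases smul_eq_zero.mp key.symm with h | h
    · exact h
    · exact absurd h hv
  exact ⟨p, hp, by rwa [Polynomial.eval_map, ← Polynomial.aeval_def] at h3⟩

lemma trace_isIntegral {A K L : Type*} [CommRing A] [Field K] [CommRing L]
    [Algebra A K] [Algebra K L] [Algebra A L] [IsScalarTower A K L]
    [FiniteDimensional K L] {x : L} (hx : IsIntegral A x) :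
    IsIntegral A (Algebra.trace K L x) := by
  obtain ⟨p, hp, hpx⟩ := hx
  have hpx' : Polynomial.aeval x p = 0 := hpx
  classical
  let ι := Module.Free.ChooseBasisIndex K L
  let b : Module.Basis ι K L := Module.Free.chooseBasis K L
  set M := Algebra.leftMulMatrix b x with hMdef
  have htr : Algebra.trace K L x = M.trace := Algebra.trace_eq_matrix_trace b x
  have hM : Polynomial.aeval M p = 0 := by
    rw [hMdef, show Algebra.leftMulMatrix b x
        = ((Algebra.leftMulMatrix b).restrictScalars A) x from rfl,
      Polynomial.aeval_algHom_apply, hpx', map_zero]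
  set Ω := AlgebraicClosure K
  set M' := M.map (algebraMap K Ω) with hM'def
  have hM' : Polynomial.aeval M' p = 0 := by
    rw [hM'def, show M.map (algebraMap K Ω)
        = (AlgHom.mapMatrix (IsScalarTower.toAlgHom A K Ω)) M from rfl,
      Polynomial.aeval_algHom_apply, hM, map_zero]
  have hsum : M'.trace = M'.charpoly.roots.sum := Matrix.trace_eq_sum_roots_charpoly (A := M')
  have hint : IsIntegral A M'.trace := by
    rw [hsum]
    exact IsIntegral.multiset_sum fun μ hμ => root_charpoly_isIntegral hp hM' hμ
  have hcomm : algebraMap K Ω M.trace = M'.trace := by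
    simp [Matrix.trace, hM'def, Matrix.diag, map_sum]
  rw [htr, ← isIntegral_algebraMap_iff (algebraMap K Ω).injective, hcomm]
  exact hint

set_option synthInstance.maxHeartbeats 1000000 in
/-- **Finite extensions of integrally closed ℚ-algebras are split.**
If `A` is an integrally closed domain containing `ℚ`, then every finite injective ring
extension `A → B` admits an `A`-linear retraction `r : B → A` with `r(f(a)) = a`. -/
theorem statement1 {A B : Type} [CommRing A] [IsDomain A] [Algebra ℚ A]
    [IsIntegrallyClosed A] [CommRing B] [Algebra A B] [Module.Finite A B]
    (hinj : Function.Injective (algebraMap A B)) :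
    ∃ r : B →ₗ[A] A, ∀ a : A, r (algebraMap A B a) = a := by
  classical
  let K := FractionRing A
  let L := K ⊗[A] B
  have hKL : Function.Injective (algebraMap K L) := by
    have hflat : Function.Injective (LinearMap.lTensor K (Algebra.linearMap A B)) :=
      Module.Flat.lTensor_preserves_injective_linearMap _ hinj
    intro x y h
    apply (TensorProduct.rid A K).symm.injective
    apply hflat
    have hx : (LinearMap.lTensor K (Algebra.linearMap A B)) ((TensorProduct.rid A K).symm x)
        = algebraMap K L x := by
      simp [TensorProduct.rid, Algebra.TensorProduct.algebraMap_apply]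
      rfl
    rw [hx]
    have hy : (LinearMap.lTensor K (Algebra.linearMap A B)) ((TensorProduct.rid A K).symm y)
        = algebraMap K L y := by
      simp [TensorProduct.rid, Algebra.TensorProduct.algebraMap_apply]
      rfl
    rw [hy, h]
  haveI : Module.Finite K L := Module.Finite.base_change A K B
  haveI : Nontrivial L := ⟨⟨algebraMap K L 0, algebraMap K L 1, fun h => zero_ne_one (hKL h)⟩⟩
  set n := Module.finrank K L with hndef
  have hn : 0 < n := Module.finrank_pos
  let T : B →ₗ[A] K := ((Algebra.trace K L).restrictScalars A).comp
    (Algebra.TensorProduct.includeRight (R := A) (A := K) (B := B)).toLinearMap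
  have hTmem : ∀ bb : B, T bb ∈ LinearMap.range (Algebra.linearMap A K) := by
    intro bb
    have hint : IsIntegral A ((Algebra.TensorProduct.includeRight : B →ₐ[A] L) bb) :=
      (IsIntegral.of_finite A bb).map _
    obtain ⟨a, ha⟩ := IsIntegrallyClosed.isIntegral_iff.mp (trace_isIntegral (K := K) (L := L) hint)
    exact ⟨a, ha⟩
  have hι : Function.Injective (Algebra.linearMap A K) := IsFractionRing.injective A K
  let e : A ≃ₗ[A] LinearMap.range (Algebra.linearMap A K) :=
    LinearEquiv.ofInjective (Algebra.linearMap A K) hι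
  let r₀ : B →ₗ[A] A := e.symm.toLinearMap.comp
    (T.codRestrict (LinearMap.range (Algebra.linearMap A K)) hTmem)
  have hr₀ : ∀ bb : B, algebraMap A K (r₀ bb) = T bb := by
    intro bb
    have h1 : e (r₀ bb) = T.codRestrict _ hTmem bb := by
      simp [r₀]
    have := congrArg Subtype.val h1
    simpa [e, LinearEquiv.ofInjective_apply] using this
  have hfin : ∀ a : A, r₀ (algebraMap A B a) = n • a := by
    intro a
    apply hι
    show algebraMap A K (r₀ (algebraMap A B a)) = algebraMap A K (n • a)
    rw [hr₀, map_nsmul]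
    show Algebra.trace K L (Algebra.TensorProduct.includeRight (algebraMap A B a)) = _
    rw [(Algebra.TensorProduct.includeRight (R := A) (A := K) (B := B)).commutes a,
      IsScalarTower.algebraMap_apply A K L a, Algebra.trace_algebraMap]
  refine ⟨(n : ℚ)⁻¹ • r₀, fun a => ?_⟩
  have : ((n : ℚ)⁻¹ • r₀) (algebraMap A B a) = (n : ℚ)⁻¹ • (n • a) := by
    rw [LinearMap.smul_apply, hfin]
  rw [this, ← Nat.cast_smul_eq_nsmul ℚ, smul_smul,
    inv_mul_cancel₀ (by exact_mod_cast hn.ne'), one_smul]
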